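/- Let f be a probability density supported on [-1,1] with c_d \le f \le C_d on [-1,1], and p(x,t) = (\varphi_t * f)(x). Then for t > 1 and all |x| \le 1 + C\sqrt{t}, one has (2 c_d/\sqrt{t}) \phi(C+2) \le p(x,t) \le C_d \sqrt{2/\pi} / \sqrt{t}; that is, p(x,t) is of order 1/\sqrt{t} uniformly on this region. -/

import Mathlib

open MeasureTheory Real

/-- Density of `N(0,t)`. -/
noncomputable def gaussDensity (t x : ℝ) : ℝ :=
  (Real.sqrt (2 * Real.pi * t))⁻¹ * Real.exp (-x ^ 2 / (2 * t))

/-- Standard Gaussian density. -/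
noncomputable def stdGauss (x : ℝ) : ℝ := gaussDensity 1 x

/-- If `f` is a probability density supported on `[-1,1]` with `c_d ≤ f ≤ C_d` there, then for
`t > 1` and all `|x| ≤ 1 + C√t`, the diffused density `p(x,t) = (φ_t * f)(x)` satisfies
`(2c_d/√t)·φ(C+2) ≤ p(x,t) ≤ C_d·√(2/π)/√t`; in particular `p(x,t)` is of order `1/√t`. -/
theorem diffused_density_order_large_t
    (f : ℝ → ℝ) (c_d C_d : ℝ) (hc : 0 < c_d) (hcC : c_d ≤ C_d)
    (hf0 : ∀ x, 0 ≤ f x) (hmeas : Measurable f)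
    (hsupp : ∀ x, x ∉ Set.Icc (-1 : ℝ) 1 → f x = 0)
    (hfint : ∫ x, f x = 1)
    (hbounds : ∀ x ∈ Set.Icc (-1 : ℝ) 1, c_d ≤ f x ∧ f x ≤ C_d)
    (C t x : ℝ) (hC : 0 < C) (ht : 1 < t)
    (hx : |x| ≤ 1 + C * Real.sqrt t) :
    (2 * c_d / Real.sqrt t) * stdGauss (C + 2)
        ≤ ∫ μ, gaussDensity t (x - μ) * f μ ∧
    (∫ μ, gaussDensity t (x - μ) * f μ)
        ≤ C_d * Real.sqrt (2 / Real.pi) / Real.sqrt t := by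
  have ht0 : (0:ℝ) < t := lt_trans one_pos ht
  have hπ : (0:ℝ) < Real.pi := Real.pi_pos
  have hS : 0 < Real.sqrt (2 * Real.pi * t) := Real.sqrt_pos.2 (by positivity)
  have hst : 0 < Real.sqrt t := Real.sqrt_pos.2 ht0
  have hst1 : 1 ≤ Real.sqrt t := by
    rw [show (1:ℝ) = Real.sqrt 1 by simp]
    exact Real.sqrt_le_sqrt ht.le
  have hC_d : (0:ℝ) ≤ C_d := hc.le.trans hcC
  set g : ℝ → ℝ := fun μ => gaussDensity t (x - μ) * f μ with hg
  have hzero : ∀ μ ∉ Set.Icc (-1:ℝ) 1, g μ = 0 := by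
    intro μ hμ; simp [hg, hsupp μ hμ]
  have hmeasg : Measurable g := by
    apply Measurable.mul _ hmeas
    unfold gaussDensity
    fun_prop
  -- pointwise upper bound for the gaussian
  have hub : ∀ y : ℝ, gaussDensity t y ≤ (Real.sqrt (2 * Real.pi * t))⁻¹ := by
    intro y
    unfold gaussDensity
    exact mul_le_of_le_one_right (by positivity)
      (Real.exp_le_one_iff.2
        (div_nonpos_of_nonpos_of_nonneg (neg_nonpos.2 (sq_nonneg y)) (by positivity)))
  have hgauss_nonneg : ∀ y : ℝ, 0 ≤ gaussDensity t y := by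
    intro y; unfold gaussDensity; positivity
  -- pointwise lower bound for μ ∈ [-1,1]
  have hlb : ∀ μ ∈ Set.Icc (-1:ℝ) 1,
      (Real.sqrt (2 * Real.pi * t))⁻¹ * Real.exp (-(C+2)^2/2) ≤ gaussDensity t (x - μ) := by
    intro μ hμ
    unfold gaussDensity
    apply mul_le_mul_of_nonneg_left _ (by positivity)
    apply Real.exp_le_exp.2
    rw [div_le_div_iff₀ (by norm_num : (0:ℝ) < 2) (by positivity : (0:ℝ) < 2*t)]
    have h1 : |x - μ| ≤ (C + 2) * Real.sqrt t := by
      have hμ' : |μ| ≤ 1 := abs_le.2 ⟨hμ.1, hμ.2⟩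
      have : |x - μ| ≤ |x| + |μ| := abs_sub x μ
      nlinarith [abs_nonneg (x - μ)]
    have h2 : (x - μ)^2 ≤ (C + 2)^2 * t := by
      have := sq_abs (x - μ)
      nlinarith [abs_nonneg (x - μ), Real.sq_sqrt ht0.le, Real.sqrt_nonneg t]
    nlinarith
  -- integrability
  have hintIcc : IntegrableOn g (Set.Icc (-1:ℝ) 1) := by
    apply Measure.integrableOn_of_bounded (M := (Real.sqrt (2 * Real.pi * t))⁻¹ * C_d)
      (by simp) hmeasg.aestronglyMeasurable
    filter_upwards with μ
    rw [Real.norm_eq_abs, abs_of_nonneg (mul_nonneg (hgauss_nonneg _) (hf0 μ))]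
    by_cases hμ : μ ∈ Set.Icc (-1:ℝ) 1
    · exact mul_le_mul (hub _) (hbounds μ hμ).2 (hf0 μ) (by positivity)
    · rw [hsupp μ hμ, mul_zero]; positivity
  have hintfull : Integrable g := by
    rw [← integrableOn_iff_integrable_of_support_subset
      (s := Set.Icc (-1:ℝ) 1) (fun μ hμ => by_contra fun h => hμ (hzero μ h))]
    exact hintIcc
  have hIeq : ∫ μ in Set.Icc (-1:ℝ) 1, g μ = ∫ μ, g μ :=
    setIntegral_eq_integral_of_forall_compl_eq_zero hzero
  have hvol : (volume (Set.Icc (-1:ℝ) 1)).toReal = 2 := by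
    rw [Real.volume_Icc]; norm_num
  constructor
  · -- lower bound
    have key : ((Real.sqrt (2 * Real.pi * t))⁻¹ * Real.exp (-(C+2)^2/2) * c_d) *
        (volume (Set.Icc (-1:ℝ) 1)).toReal ≤ ∫ μ in Set.Icc (-1:ℝ) 1, g μ := by
      apply setIntegral_ge_of_const_le_real measurableSet_Icc (by simp)
      · intro μ hμ
        exact mul_le_mul (hlb μ hμ) (hbounds μ hμ).1 hc.le (hgauss_nonneg _)
      · exact hintIcc
    rw [hIeq, hvol] at key
    refine le_trans (le_of_eq ?_) key
    unfold stdGauss gaussDensity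
    rw [Real.sqrt_mul (by positivity) t]
    have h2π : Real.sqrt (2 * Real.pi) ≠ 0 := by positivity
    field_simp
  · -- upper bound
    have key : ∫ μ in Set.Icc (-1:ℝ) 1, g μ ≤
        ((Real.sqrt (2 * Real.pi * t))⁻¹ * C_d) * (volume (Set.Icc (-1:ℝ) 1)).toReal := by
      rw [show ((Real.sqrt (2 * Real.pi * t))⁻¹ * C_d) * (volume (Set.Icc (-1:ℝ) 1)).toReal
        = ∫ _ in Set.Icc (-1:ℝ) 1, (Real.sqrt (2 * Real.pi * t))⁻¹ * C_d by
          rw [setIntegral_const]; rw [smul_eq_mul]; rw [Measure.real]; ring]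
      apply setIntegral_mono_on hintIcc (integrableOn_const (by simp) enorm_ne_top)
        measurableSet_Icc
      intro μ hμ
      exact mul_le_mul (hub _) (hbounds μ hμ).2 (hf0 μ) (by positivity)
    rw [hIeq, hvol] at key
    refine le_trans key (le_of_eq ?_)
    have h2 : Real.sqrt 2 * Real.sqrt 2 = 2 := Real.mul_self_sqrt (by norm_num)
    rw [Real.sqrt_mul (by positivity) t, Real.sqrt_mul (by norm_num : (0:ℝ) ≤ 2) Real.pi,
      Real.sqrt_div (by norm_num : (0:ℝ) ≤ 2) Real.pi]
    have hπ' : Real.sqrt Real.pi ≠ 0 := by positivity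
    have h2' : Real.sqrt 2 ≠ 0 := by positivity
    field_simp
    linear_combination (-C_d) * h2
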